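/- Let d ∈ {1, 2, 3}, fix λ > 0, and let S : ℝ → ℝ be continuous on [−4dλ, 0] with S(0) = 1, |S(z)| < 1 for all z ∈ [−4dλ, 0), and S differentiable at 0 with S′(0) = 1. Then there exists a constant C̃ > 0 (depending only on S, d and λ) such that for every integer K ≥ 2, with Δt = λ/K², s_k = −4ΔtK² Σ_{j=1}^d sin²(π k_j/(2K)), and ⟨1, v_k⟩ = Σ_{i ∈ {1,…,K−1}^d} Π_{j=1}^d sin(π i_j k_j / K), one has K^{−d} Σ_{k ∈ {1,…,K−1}^d} ⟨1, v_k⟩ / (1 − |S(s_k)|) ≤ C̃·Δt^{−1}. -/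

import Mathlib

open Real

/-- The eigenvalue arguments `s_k = −Δt·λ_k^h` of the stability function, with
`Δt = λ/K²` and multi-index `k` with components `(k j) + 1 ∈ {1,…,K−1}`. -/
noncomputable def sVal (K d : ℕ) (lam : ℝ) (k : Fin d → Fin (K - 1)) : ℝ :=
  -(4 * (lam / (K : ℝ) ^ 2) * (K : ℝ) ^ 2
    * ∑ j, Real.sin (π * (((k j : ℕ) : ℝ) + 1) / (2 * K)) ^ 2)

/-- The sum of the entries of the discrete sine eigenvector `v_k`,
i.e. `⟨1, v_k⟩ = Σ_{i∈{1,…,K−1}^d} Π_j sin(π i_j k_j / K)`. -/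
noncomputable def onesDotV (K d : ℕ) (k : Fin d → Fin (K - 1)) : ℝ :=
  ∑ i : Fin d → Fin (K - 1),
    ∏ j, Real.sin (π * (((i j : ℕ) : ℝ) + 1) * (((k j : ℕ) : ℝ) + 1) / K)

section SeriesBoundAux
open Finset

lemma sine_sum_bounds {K m : ℕ} (hK : 2 ≤ K) (hm1 : 1 ≤ m) (hm2 : m ≤ K - 1) :
    0 ≤ ∑ i ∈ Finset.range (K - 1), Real.sin (π * ((i : ℝ) + 1) * m / K) ∧
      ∑ i ∈ Finset.range (K - 1), Real.sin (π * ((i : ℝ) + 1) * m / K) ≤ (K : ℝ) / m := by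
  have hπ := Real.pi_pos
  have hK0 : (0:ℝ) < K := by exact_mod_cast (by omega : 0 < K)
  have hmR : (1:ℝ) ≤ m := by exact_mod_cast hm1
  have hmK : (m:ℝ) < K := by exact_mod_cast (by omega : m < K)
  set θ : ℝ := π * m / K with hθ
  have hhalf0 : 0 < θ / 2 := by rw [hθ]; positivity
  have hhalfle : θ / 2 < π / 2 := by
    have : π * m / K < π := by rw [div_lt_iff₀ hK0]; nlinarith
    rw [hθ]; linarith
  have hs : 0 < Real.sin (θ/2) :=
    Real.sin_pos_of_pos_of_lt_pi hhalf0 (by linarith)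
  have hcos : 0 ≤ Real.cos (θ/2) :=
    Real.cos_nonneg_of_mem_Icc ⟨by linarith, le_of_lt hhalfle⟩
  have hsin_lb : (m:ℝ)/K ≤ Real.sin (θ/2) := by
    have h2 : 2/π * (θ/2) = (m:ℝ)/K := by rw [hθ]; field_simp
    calc (m:ℝ)/K = 2/π * (θ/2) := h2.symm
      _ ≤ Real.sin (θ/2) := Real.mul_le_sin hhalf0.le hhalfle.le
  have key : ∀ i : ℕ, 2 * Real.sin (θ/2) * Real.sin (π * ((i:ℝ)+1) * m / K)
      = Real.cos (((i:ℝ) + 1/2) * θ) - Real.cos ((((i:ℝ)+1) + 1/2) * θ) := by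
    intro i
    rw [Real.cos_sub_cos]
    have e1 : ((((i:ℝ) + 1/2) * θ + (((i:ℝ)+1) + 1/2) * θ)) / 2 = ((i:ℝ)+1) * θ := by ring
    have e2 : ((((i:ℝ) + 1/2) * θ - (((i:ℝ)+1) + 1/2) * θ)) / 2 = -(θ/2) := by ring
    rw [e1, e2, Real.sin_neg]
    have e3 : π * ((i:ℝ)+1) * m / K = ((i:ℝ)+1) * θ := by rw [hθ]; ring
    rw [e3]; ring
  have tele : 2 * Real.sin (θ/2) * (∑ i ∈ Finset.range (K-1), Real.sin (π * ((i:ℝ)+1) * m / K))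
      = Real.cos (θ/2) - (-1:ℝ)^m * Real.cos (θ/2) := by
    rw [Finset.mul_sum, Finset.sum_congr rfl (fun i _ => key i)]
    have htel := Finset.sum_range_sub' (fun i : ℕ => Real.cos (((i:ℝ) + 1/2) * θ)) (K-1)
    push_cast at htel
    rw [htel]
    have hc1 : ((0:ℝ) + 1/2) * θ = θ/2 := by ring
    have hc2 : (((K:ℕ) - 1 : ℕ) : ℝ) = (K:ℝ) - 1 := by
      push_cast [Nat.cast_sub (by omega : 1 ≤ K)]; ring
    have hc3 : ((((K:ℕ) - 1 : ℕ) : ℝ) + 1/2) * θ = m * π - θ/2 := by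
      rw [hc2, hθ]; field_simp; ring
    rw [hc1, hc3, Real.cos_nat_mul_pi_sub]
  set A := ∑ i ∈ Finset.range (K-1), Real.sin (π * ((i:ℝ)+1) * m / K) with hAdef
  have hsign : ((-1:ℝ))^m = 1 ∨ ((-1:ℝ))^m = -1 := neg_one_pow_eq_or ℝ m
  have hA : A = (Real.cos (θ/2) * (1 - (-1:ℝ)^m)) / (2 * Real.sin (θ/2)) := by
    rw [eq_div_iff (by positivity)]
    linear_combination tele
  constructor
  · rw [hA]
    apply div_nonneg _ (by positivity)
    apply mul_nonneg hcos
    rcases hsign with h | h <;> rw [h] <;> norm_num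
  · rw [hA]
    have hnum : Real.cos (θ/2) * (1 - (-1:ℝ)^m) ≤ 2 := by
      have := Real.cos_le_one (θ/2)
      rcases hsign with h | h <;> rw [h] <;> nlinarith
    calc Real.cos (θ/2) * (1 - (-1:ℝ)^m) / (2 * Real.sin (θ/2))
        ≤ 2 / (2 * Real.sin (θ/2)) := by
          exact div_le_div_of_nonneg_right hnum (by positivity) |>.trans_eq rfl
      _ = 1 / Real.sin (θ/2) := by
          rw [div_eq_div_iff (by positivity) (by positivity)]; ring
      _ ≤ (K:ℝ)/m := by
          rw [div_le_div_iff₀ hs (by positivity)]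
          have h1 : (m:ℝ) = (m/K)*K := by field_simp
          nlinarith [mul_le_mul_of_nonneg_left hsin_lb hK0.le]


lemma sin_half_bounds {K m : ℕ} (hK : 2 ≤ K) (hm1 : 1 ≤ m) (hm2 : m ≤ K - 1) :
    (m:ℝ)/K ≤ Real.sin (π * m / (2*K)) ∧ 0 < Real.sin (π * m / (2*K)) := by
  have hπ := Real.pi_pos
  have hK0 : (0:ℝ) < K := by exact_mod_cast (by omega : 0 < K)
  have hmR : (1:ℝ) ≤ m := by exact_mod_cast hm1
  have hmK : (m:ℝ) < K := by exact_mod_cast (by omega : m < K)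
  have h0 : 0 < π * m / (2*K) := by positivity
  have h1 : π * m / (2*K) < π/2 := by
    rw [div_lt_div_iff₀ (by positivity) (by norm_num)]
    nlinarith
  constructor
  · have h2 : 2/π * (π * m / (2*K)) = (m:ℝ)/K := by field_simp
    calc (m:ℝ)/K = 2/π * (π * m / (2*K)) := h2.symm
      _ ≤ Real.sin (π * m / (2*K)) := Real.mul_le_sin h0.le h1.le
  · exact Real.sin_pos_of_pos_of_lt_pi h0 (by linarith)


lemma denom_lower {M : ℝ} (hM : 0 < M) (S : ℝ → ℝ)
    (hcont : ContinuousOn S (Set.Icc (-M) 0)) (hS0 : S 0 = 1)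
    (hSlt : ∀ z ∈ Set.Ico (-M) 0, |S z| < 1) (hderiv : HasDerivAt S 1 0) :
    ∃ c > 0, ∀ z ∈ Set.Ico (-M) 0, c * (-z) ≤ 1 - |S z| := by
  have hlo := (hasDerivAt_iff_isLittleO.mp hderiv).def (by norm_num : (0:ℝ) < 1/2)
  rw [Metric.eventually_nhds_iff] at hlo
  obtain ⟨δ0, hδ0, hδ⟩ := hlo
  set δ : ℝ := min (δ0/2) (min M (1/2)) with hδdef
  have hδpos : 0 < δ := lt_min (by linarith) (lt_min hM (by norm_num))
  have hδM : δ ≤ M := le_trans (min_le_right _ _) (min_le_left _ _)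
  have hδhalf : δ ≤ 1/2 := le_trans (min_le_right _ _) (min_le_right _ _)
  have hδlt : δ < δ0 := lt_of_le_of_lt (min_le_left _ _) (by linarith)
  have hsmall : ∀ z : ℝ, -δ ≤ z → z < 0 → (1:ℝ)/2 * (-z) ≤ 1 - |S z| := by
    intro z hz1 hz2
    have hdist : dist z 0 < δ0 := by
      rw [Real.dist_eq, sub_zero, abs_of_nonpos hz2.le]; linarith
    have h := hδ hdist
    simp only [hS0, sub_zero, smul_eq_mul, mul_one, Real.norm_eq_abs] at h
    rw [abs_of_nonpos hz2.le] at h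
    have h' := abs_le.mp h
    have hSz : |S z| ≤ 1 + z/2 := by
      rw [abs_le]; constructor <;> [linarith; linarith]
    linarith
  have hTne : Set.Nonempty (Set.Icc (-M) (-δ)) := ⟨-M, le_refl _, by linarith⟩
  have hTsub : Set.Icc (-M) (-δ) ⊆ Set.Icc (-M) 0 := Set.Icc_subset_Icc_right (by linarith)
  have hcont' : ContinuousOn (fun z => |S z|) (Set.Icc (-M) (-δ)) := (hcont.mono hTsub).abs
  obtain ⟨z₀, hz₀mem, hz₀max⟩ := isCompact_Icc.exists_isMaxOn hTne hcont'
  have hz₀lt : |S z₀| < 1 := hSlt z₀ ⟨hz₀mem.1, lt_of_le_of_lt hz₀mem.2 (by linarith)⟩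
  set ε : ℝ := 1 - |S z₀| with hεdef
  have hε : 0 < ε := by simp [hεdef]; linarith
  refine ⟨min (1/2) (ε/M), lt_min (by norm_num) (by positivity), ?_⟩
  rintro z ⟨hz1, hz2⟩
  by_cases hcase : -δ ≤ z
  · calc min (1/2) (ε/M) * (-z) ≤ 1/2 * (-z) :=
        mul_le_mul_of_nonneg_right (min_le_left _ _) (by linarith)
      _ ≤ 1 - |S z| := hsmall z hcase hz2
  · push_neg at hcase
    have hmem : z ∈ Set.Icc (-M) (-δ) := ⟨hz1, hcase.le⟩
    have hmax : |S z| ≤ |S z₀| := hz₀max hmem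
    calc min (1/2) (ε/M) * (-z) ≤ (ε/M) * (-z) :=
        mul_le_mul_of_nonneg_right (min_le_right _ _) (by linarith)
      _ ≤ (ε/M) * M := mul_le_mul_of_nonneg_left (by linarith) (by positivity)
      _ = ε := by field_simp
      _ ≤ 1 - |S z| := by simp [hεdef]; linarith

end SeriesBoundAux

open Finset in
/-- For `d ∈ {1,2,3}`:
`K^{−d} Σ_{k∈{1,…,K−1}^d} ⟨1, v_k⟩/(1 − |S(s_k)|) ≤ C̃ Δt⁻¹` with `Δt = λ/K²`. -/
theorem series_bound_ones_dot_v (d : ℕ) (hd : d = 1 ∨ d = 2 ∨ d = 3)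
    (lam : ℝ) (hlam : 0 < lam) (S : ℝ → ℝ)
    (hcont : ContinuousOn S (Set.Icc (-(4 * (d : ℝ) * lam)) 0))
    (hS0 : S 0 = 1)
    (hSlt : ∀ z ∈ Set.Ico (-(4 * (d : ℝ) * lam)) 0, |S z| < 1)
    (hderiv : HasDerivAt S 1 0) :
    ∃ C > 0, ∀ K : ℕ, 2 ≤ K →
      ((K : ℝ) ^ d)⁻¹ * ∑ k : Fin d → Fin (K - 1),
          onesDotV K d k / (1 - |S (sVal K d lam k)|)
        ≤ C * (lam / (K : ℝ) ^ 2)⁻¹ := by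
  have hd1 : 1 ≤ d := by rcases hd with h | h | h <;> omega
  have hdR : (0:ℝ) < (d:ℝ) := by exact_mod_cast (by omega : 0 < d)
  have hdne : (d:ℝ) ≠ 0 := hdR.ne'
  have hM : (0:ℝ) < 4 * (d:ℝ) * lam := by positivity
  obtain ⟨c, hc, hcle⟩ := denom_lower hM S hcont hS0 hSlt hderiv
  set p : ℝ := 1 + 2 / (d:ℝ) with hpdef
  have hp : 1 < p := by
    have : (0:ℝ) < 2 / (d:ℝ) := by positivity
    rw [hpdef]; linarith
  have hsum : Summable (fun n : ℕ => 1 / ((n:ℝ)+1) ^ p) := by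
    have h1 := Real.summable_one_div_nat_rpow.mpr hp
    have h2 := (summable_nat_add_iff 1).mpr h1
    simp only [Nat.cast_add, Nat.cast_one] at h2
    exact h2
  set B : ℝ := ∑' n : ℕ, 1 / ((n:ℝ)+1) ^ p with hBdef
  have hB0 : 0 ≤ B := tsum_nonneg (fun n => by positivity)
  refine ⟨(B^d + 1) / (4 * c * d), by positivity, ?_⟩
  intro K hK
  have hK0 : (0:ℝ) < K := by exact_mod_cast (by omega : 0 < K)
  have hKne : (K:ℝ) ≠ 0 := hK0.ne'
  haveI : Nonempty (Fin d) := Fin.pos_iff_nonempty.mp (by omega)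
  -- the power identity
  have hpow : ∀ x : ℝ, 0 < x → x * (x^2) ^ ((1:ℝ)/(d:ℝ)) = x ^ p := by
    intro x hx
    have h1 : (x^2 : ℝ) = x ^ ((2:ℝ)) := by
      rw [← Real.rpow_natCast x 2]; norm_num
    rw [h1, ← Real.rpow_mul hx.le]
    calc x * x ^ ((2:ℝ) * (1/(d:ℝ)))
        = x ^ (1:ℝ) * x ^ ((2:ℝ)*(1/(d:ℝ))) := by rw [Real.rpow_one]
      _ = x ^ (1 + (2:ℝ)*(1/(d:ℝ))) := (Real.rpow_add hx _ _).symm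
      _ = x ^ p := by rw [hpdef]; ring_nf
  -- numerator bound
  have hnum : ∀ k : Fin d → Fin (K-1),
      0 ≤ onesDotV K d k ∧
      onesDotV K d k ≤ ∏ j, ((K:ℝ) / (((k j : ℕ):ℝ) + 1)) := by
    intro k
    have hfact : onesDotV K d k
        = ∏ j, ∑ i ∈ Finset.range (K-1),
            Real.sin (π * ((i:ℝ)+1) * (((k j : ℕ):ℝ)+1) / K) := by
      rw [onesDotV, ← Fintype.piFinset_univ]
      refine (Finset.sum_prod_piFinset Finset.univ
        (fun (j : Fin d) (x : Fin (K-1)) =>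
          Real.sin (π * (((x : ℕ):ℝ)+1) * (((k j : ℕ):ℝ)+1) / K))).trans ?_
      refine Finset.prod_congr rfl fun j _ => ?_
      exact Fin.sum_univ_eq_sum_range
        (fun i => Real.sin (π * ((i:ℝ)+1) * (((k j : ℕ):ℝ)+1) / K)) (K-1)
    have hb : ∀ j : Fin d,
        0 ≤ ∑ i ∈ Finset.range (K-1), Real.sin (π * ((i:ℝ)+1) * (((k j : ℕ):ℝ)+1) / K) ∧
        ∑ i ∈ Finset.range (K-1), Real.sin (π * ((i:ℝ)+1) * (((k j : ℕ):ℝ)+1) / K)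
          ≤ (K:ℝ) / (((k j : ℕ):ℝ)+1) := by
      intro j
      have hb' := sine_sum_bounds (K := K) (m := (k j : ℕ) + 1) hK (by omega)
        (by have := (k j).2; omega)
      push_cast at hb'
      exact hb'
    constructor
    · rw [hfact]; exact Finset.prod_nonneg fun j _ => (hb j).1
    · rw [hfact]; exact Finset.prod_le_prod (fun j _ => (hb j).1) (fun j _ => (hb j).2)
  -- denominator bound
  have hdenom : ∀ k : Fin d → Fin (K-1),
      (4*c*lam/(K:ℝ)^2) * (∑ j, (((k j : ℕ):ℝ)+1)^2) ≤ 1 - |S (sVal K d lam k)| := by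
    intro k
    have hsin : ∀ j : Fin d,
        (((k j:ℕ):ℝ)+1)/(K:ℝ) ≤ Real.sin (π * (((k j:ℕ):ℝ)+1) / (2*K)) ∧
        0 < Real.sin (π * (((k j:ℕ):ℝ)+1) / (2*K)) := by
      intro j
      have hb := sin_half_bounds (K := K) (m := (k j:ℕ)+1) hK (by omega)
        (by have := (k j).2; omega)
      push_cast at hb
      exact hb
    have hσpos : 0 < ∑ j, Real.sin (π * (((k j:ℕ):ℝ)+1) / (2*K)) ^ 2 :=
      Finset.sum_pos (fun j _ => pow_pos (hsin j).2 2) Finset.univ_nonempty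
    have hσle : ∑ j, Real.sin (π * (((k j:ℕ):ℝ)+1) / (2*K)) ^ 2 ≤ (d:ℝ) := by
      calc ∑ j, Real.sin (π * (((k j:ℕ):ℝ)+1) / (2*K)) ^ 2
          ≤ ∑ _j : Fin d, (1:ℝ) := Finset.sum_le_sum (fun j _ => Real.sin_sq_le_one _)
        _ = (d:ℝ) := by simp
    have hsVal : sVal K d lam k
        = -(4*lam* ∑ j, Real.sin (π * (((k j:ℕ):ℝ)+1) / (2*K)) ^ 2) := by
      rw [sVal]
      have h4 : 4 * (lam/(K:ℝ)^2) * (K:ℝ)^2 = 4*lam := by field_simp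
      rw [h4]
    have hmem : sVal K d lam k ∈ Set.Ico (-(4 * (d:ℝ) * lam)) 0 := by
      rw [hsVal]
      constructor
      · rw [neg_le_neg_iff]; nlinarith
      · rw [neg_lt, neg_zero]; positivity
    have h := hcle _ hmem
    have hSigma : (∑ j, (((k j:ℕ):ℝ)+1)^2) / (K:ℝ)^2
        ≤ ∑ j, Real.sin (π * (((k j:ℕ):ℝ)+1) / (2*K)) ^ 2 := by
      rw [Finset.sum_div]
      refine Finset.sum_le_sum fun j _ => ?_
      have h1 := (hsin j).1
      have h2 : (0:ℝ) ≤ (((k j:ℕ):ℝ)+1)/(K:ℝ) := by positivity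
      calc (((k j:ℕ):ℝ)+1)^2/(K:ℝ)^2 = ((((k j:ℕ):ℝ)+1)/(K:ℝ))^2 := by rw [div_pow]
        _ ≤ Real.sin (π * (((k j:ℕ):ℝ)+1) / (2*K)) ^ 2 := pow_le_pow_left₀ h2 h1 2
    calc (4*c*lam/(K:ℝ)^2) * (∑ j, (((k j : ℕ):ℝ)+1)^2)
        = c * (4*lam*((∑ j, (((k j : ℕ):ℝ)+1)^2)/(K:ℝ)^2)) := by ring
      _ ≤ c * (4*lam*(∑ j, Real.sin (π * (((k j:ℕ):ℝ)+1) / (2*K)) ^ 2)) := by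
          refine mul_le_mul_of_nonneg_left ?_ hc.le
          nlinarith
      _ = c * (-(sVal K d lam k)) := by rw [hsVal]; ring
      _ ≤ 1 - |S (sVal K d lam k)| := h
  -- positivity facts about the multi-index values
  have hm1 : ∀ (k : Fin d → Fin (K-1)) (j : Fin d), (1:ℝ) ≤ ((k j:ℕ):ℝ)+1 := by
    intro k j
    have : (0:ℝ) ≤ ((k j:ℕ):ℝ) := Nat.cast_nonneg _
    linarith
  have hSigmam2pos : ∀ k : Fin d → Fin (K-1), 0 < ∑ j, (((k j : ℕ):ℝ)+1)^2 := by
    intro k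
    exact Finset.sum_pos (fun j _ => by positivity) Finset.univ_nonempty
  have hDpos : ∀ k : Fin d → Fin (K-1),
      0 < (4*c*lam/(K:ℝ)^2) * (∑ j, (((k j : ℕ):ℝ)+1)^2) := by
    intro k
    have := hSigmam2pos k
    positivity
  -- AM-GM
  have hamgm : ∀ k : Fin d → Fin (K-1),
      (d:ℝ) * ∏ j, ((((k j:ℕ):ℝ)+1)^2) ^ ((1:ℝ)/(d:ℝ)) ≤ ∑ j, (((k j:ℕ):ℝ)+1)^2 := by
    intro k
    have h := Real.geom_mean_le_arith_mean_weighted Finset.univ (fun _ => 1/(d:ℝ))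
      (fun j => (((k j:ℕ):ℝ)+1)^2) (fun i _ => by positivity)
      (by rw [Finset.sum_const, Finset.card_univ, Fintype.card_fin, nsmul_eq_mul]
          field_simp)
      (fun i _ => by positivity)
    rw [← Finset.mul_sum] at h
    calc (d:ℝ) * ∏ j, ((((k j:ℕ):ℝ)+1)^2) ^ ((1:ℝ)/(d:ℝ))
        ≤ (d:ℝ) * ((1/(d:ℝ)) * ∑ j, (((k j:ℕ):ℝ)+1)^2) :=
          mul_le_mul_of_nonneg_left h hdR.le
      _ = ∑ j, (((k j:ℕ):ℝ)+1)^2 := by field_simp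
  -- per-term bound
  have hterm : ∀ k : Fin d → Fin (K-1),
      onesDotV K d k / (1 - |S (sVal K d lam k)|)
        ≤ ((K:ℝ)^d * (K:ℝ)^2 / (4*c*lam*d)) *
            ∏ j, ((((k j:ℕ):ℝ)+1) * ((((k j:ℕ):ℝ)+1)^2) ^ ((1:ℝ)/(d:ℝ)))⁻¹ := by
    intro k
    have hQpos : 0 < ∏ j, (((k j:ℕ):ℝ)+1) :=
      Finset.prod_pos fun j _ => by linarith [hm1 k j]
    have hWpos : 0 < ∏ j, ((((k j:ℕ):ℝ)+1)^2) ^ ((1:ℝ)/(d:ℝ)) :=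
      Finset.prod_pos fun j _ => by positivity
    have hD'pos : 0 < (4*c*lam/(K:ℝ)^2) *
        ((d:ℝ) * ∏ j, ((((k j:ℕ):ℝ)+1)^2) ^ ((1:ℝ)/(d:ℝ))) := by positivity
    calc onesDotV K d k / (1 - |S (sVal K d lam k)|)
        ≤ (∏ j, ((K:ℝ) / (((k j : ℕ):ℝ) + 1))) /
            ((4*c*lam/(K:ℝ)^2) * (∑ j, (((k j : ℕ):ℝ)+1)^2)) :=
          div_le_div₀ (Finset.prod_nonneg fun j _ => by positivity)
            (hnum k).2 (hDpos k) (hdenom k)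
      _ ≤ (∏ j, ((K:ℝ) / (((k j : ℕ):ℝ) + 1))) /
            ((4*c*lam/(K:ℝ)^2) * ((d:ℝ) * ∏ j, ((((k j:ℕ):ℝ)+1)^2) ^ ((1:ℝ)/(d:ℝ)))) := by
          apply div_le_div_of_nonneg_left (Finset.prod_nonneg fun j _ => by positivity) hD'pos
          exact mul_le_mul_of_nonneg_left (hamgm k) (by positivity)
      _ = ((K:ℝ)^d * (K:ℝ)^2 / (4*c*lam*d)) *
            ∏ j, ((((k j:ℕ):ℝ)+1) * ((((k j:ℕ):ℝ)+1)^2) ^ ((1:ℝ)/(d:ℝ)))⁻¹ := by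
          rw [Finset.prod_div_distrib, Finset.prod_const, Finset.card_univ,
            Fintype.card_fin]
          rw [show (∏ j, ((((k j:ℕ):ℝ)+1) * ((((k j:ℕ):ℝ)+1)^2) ^ ((1:ℝ)/(d:ℝ)))⁻¹)
              = ((∏ j, (((k j:ℕ):ℝ)+1)) * ∏ j, ((((k j:ℕ):ℝ)+1)^2) ^ ((1:ℝ)/(d:ℝ)))⁻¹ by
            rw [← Finset.prod_mul_distrib, ← Finset.prod_inv_distrib]]
          field_simp
  -- sum of the products
  have hsumprod : ∑ k : Fin d → Fin (K-1),
      ∏ j, ((((k j:ℕ):ℝ)+1) * ((((k j:ℕ):ℝ)+1)^2) ^ ((1:ℝ)/(d:ℝ)))⁻¹ ≤ B^d := by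
    rw [← Fintype.piFinset_univ]
    rw [Finset.sum_prod_piFinset Finset.univ
      (fun (j : Fin d) (x : Fin (K-1)) =>
        ((((x:ℕ):ℝ)+1) * ((((x:ℕ):ℝ)+1)^2) ^ ((1:ℝ)/(d:ℝ)))⁻¹)]
    have hone : ∀ _j : Fin d,
        (∑ x : Fin (K-1), ((((x:ℕ):ℝ)+1) * ((((x:ℕ):ℝ)+1)^2) ^ ((1:ℝ)/(d:ℝ)))⁻¹) ≤ B := by
      intro j
      rw [Fin.sum_univ_eq_sum_range
        (fun i => (((i:ℝ)+1) * (((i:ℝ)+1)^2) ^ ((1:ℝ)/(d:ℝ)))⁻¹) (K-1)]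
      have heq : ∀ i ∈ Finset.range (K-1),
          (((i:ℝ)+1) * (((i:ℝ)+1)^2) ^ ((1:ℝ)/(d:ℝ)))⁻¹ = 1/((i:ℝ)+1)^p := by
        intro i _
        rw [hpow ((i:ℝ)+1) (by positivity), one_div]
      rw [Finset.sum_congr rfl heq]
      exact Summable.sum_le_tsum _ (fun i _ => by positivity) hsum
    calc ∏ j, ∑ x : Fin (K-1), ((((x:ℕ):ℝ)+1) * ((((x:ℕ):ℝ)+1)^2) ^ ((1:ℝ)/(d:ℝ)))⁻¹
        ≤ ∏ _j : Fin d, B :=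
          Finset.prod_le_prod
            (fun j _ => Finset.sum_nonneg fun x _ => by positivity)
            (fun j _ => hone j)
      _ = B^d := by rw [Finset.prod_const, Finset.card_univ, Fintype.card_fin]
  -- conclusion
  have hsum_le : ∑ k : Fin d → Fin (K-1), onesDotV K d k / (1 - |S (sVal K d lam k)|)
      ≤ ((K:ℝ)^d * (K:ℝ)^2 / (4*c*lam*d)) * B^d := by
    calc ∑ k : Fin d → Fin (K-1), onesDotV K d k / (1 - |S (sVal K d lam k)|)
        ≤ ∑ k : Fin d → Fin (K-1), ((K:ℝ)^d * (K:ℝ)^2 / (4*c*lam*d)) *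
            ∏ j, ((((k j:ℕ):ℝ)+1) * ((((k j:ℕ):ℝ)+1)^2) ^ ((1:ℝ)/(d:ℝ)))⁻¹ :=
          Finset.sum_le_sum fun k _ => hterm k
      _ = ((K:ℝ)^d * (K:ℝ)^2 / (4*c*lam*d)) * ∑ k : Fin d → Fin (K-1),
            ∏ j, ((((k j:ℕ):ℝ)+1) * ((((k j:ℕ):ℝ)+1)^2) ^ ((1:ℝ)/(d:ℝ)))⁻¹ := by
          rw [Finset.mul_sum]
      _ ≤ ((K:ℝ)^d * (K:ℝ)^2 / (4*c*lam*d)) * B^d :=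
          mul_le_mul_of_nonneg_left hsumprod (by positivity)
  calc ((K : ℝ) ^ d)⁻¹ * ∑ k : Fin d → Fin (K - 1),
          onesDotV K d k / (1 - |S (sVal K d lam k)|)
      ≤ ((K : ℝ) ^ d)⁻¹ * (((K:ℝ)^d * (K:ℝ)^2 / (4*c*lam*d)) * B^d) :=
        mul_le_mul_of_nonneg_left hsum_le (by positivity)
    _ = (B^d * (K:ℝ)^2) / (4*c*lam*d) := by field_simp
    _ ≤ ((B^d + 1) * (K:ℝ)^2) / (4*c*lam*d) := by
        apply div_le_div_of_nonneg_right _ (by positivity)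
        nlinarith [sq_nonneg (K:ℝ)]
    _ = (B^d + 1) / (4 * c * d) * (lam / (K:ℝ)^2)⁻¹ := by
        field_simp
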